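/- The kernel q_t^n satisfies the discrete heat-type recursion q_{t+1}^n((x,y),(x',y')) = [Π_{i=1}^{n+1}(1 + (1/2)∇̄_{x_i}) Π_{i=1}^n(1 + (1/2)∇̄_{y_i})] q_t^n((x,y),(x',y')), where ∇̄_{x_i}, ∇̄_{y_i} are forward difference operators acting on the coordinates of the starting point (x,y). -/
import Mathlib


open Matrix BigOperators

/-- Kronecker delta `δ_i : ℤ → ℝ`. -/
noncomputable def deltaK (i : ℤ) : ℤ → ℝ := fun x => if x = i then 1 else 0

/-- Convolution `(f * g)(x) = Σ_{s+t=x} f(s) g(t)`. -/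
noncomputable def conv (f g : ℤ → ℝ) : ℤ → ℝ := fun x => ∑' s : ℤ, f s * g (x - s)

/-- The Bernoulli(1/2) step distribution `φ = (δ_0 + δ_1)/2`. -/
noncomputable def phiB : ℤ → ℝ := fun x => (deltaK 0 x + deltaK 1 x) / 2

/-- `t`-fold convolution power of `φ`. -/
noncomputable def phiPow : ℕ → ℤ → ℝ
  | 0 => deltaK 0
  | (n+1) => conv (phiPow n) phiB

/-- `Δ⁻¹ f (x) = Σ_{z ≤ x} f(z)`. -/
noncomputable def Dinv (f : ℤ → ℝ) (x : ℤ) : ℝ := ∑' z : {z : ℤ // z ≤ x}, f z.1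

/-- Backward difference `Δ f (x) = f(x) - f(x-1)`. -/
noncomputable def Dd (f : ℤ → ℝ) (x : ℤ) : ℝ := f x - f (x - 1)

/-- Vandermonde product `h_n(z) = Π_{i<j} (z_j - z_i)` (real valued). -/
noncomputable def vand (n : ℕ) (z : Fin n → ℤ) : ℝ :=
  ∏ i : Fin n, ∏ j ∈ Finset.Ioi i, ((z j - z i : ℤ) : ℝ)

/-- The interlacing cone `W^{n+1,n}`: `x_1 ≤ y_1 < x_2 ≤ … ≤ y_n < x_{n+1}`. -/
def interlace (n : ℕ) (x : Fin (n+1) → ℤ) (y : Fin n → ℤ) : Prop :=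
  ∀ i : Fin n, x i.castSucc ≤ y i ∧ y i < x i.succ

/-- The determinantal kernel `q_t^n((x,y),(x',y'))` (rows indexed by the starting
point `(x,y)`, columns by the end point `(x',y')`). -/
noncomputable def qker (n t : ℕ) (x : Fin (n+1) → ℤ) (y : Fin n → ℤ)
    (x' : Fin (n+1) → ℤ) (y' : Fin n → ℤ) : ℝ :=
  (Matrix.fromBlocks
    (Matrix.of fun i j : Fin (n+1) => phiPow t (x' j - x i))
    (Matrix.of fun (i : Fin (n+1)) (j : Fin n) =>
      Dinv (phiPow t) (y' j - x i) - if (i : ℕ) ≤ (j : ℕ) then 1 else 0)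
    (Matrix.of fun (i : Fin n) (j : Fin (n+1)) => Dd (phiPow t) (x' j - y i))
    (Matrix.of fun i j : Fin n => phiPow t (y' j - y i))).det

/-- `λ^n(x,y) = n! h_n(y)/h_{n+1}(x)`. -/
noncomputable def lam (n : ℕ) (x : Fin (n+1) → ℤ) (y : Fin n → ℤ) : ℝ :=
  (n.factorial : ℝ) * vand n y / vand (n+1) x

/-- `p_t^{n,+}(y,y') = (h_n(y')/h_n(y)) det[φ^{(t)}(y'_j - y_i)]`. -/
noncomputable def pplus (n t : ℕ) (y y' : Fin n → ℤ) : ℝ :=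
  (vand n y' / vand n y) * (Matrix.of fun i j : Fin n => phiPow t (y' j - y i)).det



lemma phiPow_succ (t : ℕ) (z : ℤ) :
    phiPow (t+1) z = (phiPow t z + phiPow t (z-1)) / 2 := by
  show conv (phiPow t) phiB z = _
  unfold conv
  rw [tsum_eq_sum (s := ({z, z-1} : Finset ℤ)) (by
    intro b hb
    simp only [Finset.mem_insert, Finset.mem_singleton, not_or] at hb
    have h1 : z - b ≠ 0 := by omega
    have h2 : z - b ≠ 1 := by omega
    simp [phiB, deltaK, h1, h2])]
  rw [Finset.sum_insert (by simp; omega), Finset.sum_singleton]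
  have h1 : z - (z - 1) = 1 := by ring
  simp [phiB, deltaK, h1]
  ring

lemma phiPow_eq_zero (t : ℕ) (z : ℤ) (h : z < 0 ∨ (t:ℤ) < z) : phiPow t z = 0 := by
  induction t generalizing z with
  | zero => have : z ≠ 0 := by omega
            simp [phiPow, deltaK, this]
  | succ t ih =>
      rw [phiPow_succ, ih z (by omega), ih (z-1) (by omega)]
      norm_num

lemma phiPow_summable (t : ℕ) : Summable (phiPow t) := by
  apply summable_of_ne_finset_zero (s := Finset.Icc (0:ℤ) t)
  intro b hb
  simp only [Finset.mem_Icc, not_and, not_le] at hb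
  exact phiPow_eq_zero t b (by omega)

def shiftE (w : ℤ) : {z : ℤ // z ≤ w - 1} ≃ {z : ℤ // z ≤ w} :=
  ⟨fun a => ⟨a.1 + 1, by have := a.2; omega⟩,
   fun a => ⟨a.1 - 1, by have := a.2; omega⟩,
   fun a => Subtype.ext (by simp),
   fun a => Subtype.ext (by simp)⟩

lemma Dinv_phiPow_succ (t : ℕ) (w : ℤ) :
    Dinv (phiPow (t+1)) w = (Dinv (phiPow t) w + Dinv (phiPow t) (w-1)) / 2 := by
  have hinj : Function.Injective (fun z : {z : ℤ // z ≤ w} => z.1 - 1) := by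
    intro a b h
    simp only at h
    exact Subtype.ext (by omega)
  have hs : Summable (fun z : {z : ℤ // z ≤ w} => phiPow t z.1) :=
    (phiPow_summable t).comp_injective Subtype.coe_injective
  have hs' : Summable (fun z : {z : ℤ // z ≤ w} => phiPow t (z.1 - 1)) :=
    (phiPow_summable t).comp_injective hinj
  have hshift : (∑' z : {z : ℤ // z ≤ w}, phiPow t (z.1 - 1))
      = ∑' z : {z : ℤ // z ≤ w - 1}, phiPow t z.1 := by
    rw [← (shiftE w).tsum_eq (fun z : {z : ℤ // z ≤ w} => phiPow t (z.1 - 1))]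
    exact tsum_congr (fun a => by show phiPow t (a.1 + 1 - 1) = _; congr 1; ring)
  unfold Dinv
  calc (∑' z : {z : ℤ // z ≤ w}, phiPow (t+1) z.1)
      = ∑' z : {z : ℤ // z ≤ w}, ((phiPow t z.1 + phiPow t (z.1 - 1)) / 2) :=
        tsum_congr (fun z => phiPow_succ t z.1)
    _ = ((∑' z : {z : ℤ // z ≤ w}, phiPow t z.1)
          + ∑' z : {z : ℤ // z ≤ w}, phiPow t (z.1 - 1)) / 2 := by
        rw [tsum_div_const, Summable.tsum_add hs hs']
    _ = _ := by rw [hshift]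

lemma Dd_phiPow_succ (t : ℕ) (w : ℤ) :
    Dd (phiPow (t+1)) w = (Dd (phiPow t) w + Dd (phiPow t) (w-1)) / 2 := by
  unfold Dd
  rw [phiPow_succ, phiPow_succ]
  ring

noncomputable def Rt (n t : ℕ) (x x' : Fin (n+1) → ℤ) (y y' : Fin n → ℤ) :
    (Fin (n+1) ⊕ Fin n) → Bool → (Fin (n+1) ⊕ Fin n) → ℝ :=
  Sum.elim
    (fun i b => Sum.elim
      (fun j => phiPow t (x' j - (x i + if b then 1 else 0)))
      (fun j => Dinv (phiPow t) (y' j - (x i + if b then 1 else 0))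
        - if (i:ℕ) ≤ (j:ℕ) then 1 else 0))
    (fun i b => Sum.elim
      (fun j => Dd (phiPow t) (x' j - (y i + if b then 1 else 0)))
      (fun j => phiPow t (y' j - (y i + if b then 1 else 0))))


/-- the discrete heat-type recursion
`q_{t+1}^n = Π_{i}(1 + (1/2)∇̄_{x_i}) Π_i (1 + (1/2)∇̄_{y_i}) q_t^n`,
the product of the forward-difference operators being written out as the average
over all `{0,1}`-shifts of the starting configuration. -/
theorem qker_heat_recursion (n t : ℕ) (x x' : Fin (n+1) → ℤ) (y y' : Fin n → ℤ) :
    qker n (t+1) x y x' y' =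
      (∑ a : Fin (n+1) → Bool, ∑ b : Fin n → Bool,
        qker n t (fun i => x i + if a i then 1 else 0)
          (fun i => y i + if b i then 1 else 0) x' y') / 2 ^ (2*n+1) := by
  classical
  have h1 : qker n (t+1) x y x' y' =
      (Matrix.detRowAlternating (R := ℝ) (n := Fin (n+1) ⊕ Fin n)).toMultilinearMap
        (fun r => ∑ b : Bool, (2:ℝ)⁻¹ • Rt n t x x' y y' r b) := by
    unfold qker
    show Matrix.detRowAlternating _ = Matrix.detRowAlternating _
    congr 1
    funext r c
    cases r with
    | inl i =>
      cases c with
      | inl j =>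
        show phiPow (t+1) (x' j - x i) = _
        simp only [Matrix.of_apply, Fintype.sum_bool, Pi.add_apply, Pi.smul_apply,
          Rt, Sum.elim_inl, Sum.elim_inr, Bool.false_eq_true, if_true, if_false, smul_eq_mul]
        rw [phiPow_succ,
          show x' j - (x i + (1:ℤ)) = x' j - x i - 1 from by ring,
          show x' j - (x i + (0:ℤ)) = x' j - x i from by ring]
        ring
      | inr j =>
        show Dinv (phiPow (t+1)) (y' j - x i) - _ = _
        simp only [Matrix.of_apply, Fintype.sum_bool, Pi.add_apply, Pi.smul_apply,
          Rt, Sum.elim_inl, Sum.elim_inr, Bool.false_eq_true, if_true, if_false, smul_eq_mul]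
        rw [Dinv_phiPow_succ,
          show y' j - (x i + (1:ℤ)) = y' j - x i - 1 from by ring,
          show y' j - (x i + (0:ℤ)) = y' j - x i from by ring]
        ring
    | inr i =>
      cases c with
      | inl j =>
        show Dd (phiPow (t+1)) (x' j - y i) = _
        simp only [Matrix.of_apply, Fintype.sum_bool, Pi.add_apply, Pi.smul_apply,
          Rt, Sum.elim_inl, Sum.elim_inr, Bool.false_eq_true, if_true, if_false, smul_eq_mul]
        rw [Dd_phiPow_succ,
          show x' j - (y i + (1:ℤ)) = x' j - y i - 1 from by ring,
          show x' j - (y i + (0:ℤ)) = x' j - y i from by ring]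
        ring
      | inr j =>
        show phiPow (t+1) (y' j - y i) = _
        simp only [Matrix.of_apply, Fintype.sum_bool, Pi.add_apply, Pi.smul_apply,
          Rt, Sum.elim_inl, Sum.elim_inr, Bool.false_eq_true, if_true, if_false, smul_eq_mul]
        rw [phiPow_succ,
          show y' j - (y i + (1:ℤ)) = y' j - y i - 1 from by ring,
          show y' j - (y i + (0:ℤ)) = y' j - y i from by ring]
        ring
  rw [h1]
  rw [(Matrix.detRowAlternating (R := ℝ) (n := Fin (n+1) ⊕ Fin n)).toMultilinearMap.map_sum
    (fun r (b : Bool) => (2:ℝ)⁻¹ • Rt n t x x' y y' r b)]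
  have h3 : ∀ rr : (Fin (n+1) ⊕ Fin n) → Bool,
      (Matrix.detRowAlternating (R := ℝ) (n := Fin (n+1) ⊕ Fin n)).toMultilinearMap
        (fun r => (2:ℝ)⁻¹ • Rt n t x x' y y' r (rr r))
      = (2:ℝ)⁻¹ ^ (2*n+1) *
        qker n t (fun i => x i + if rr (Sum.inl i) then 1 else 0)
          (fun i => y i + if rr (Sum.inr i) then 1 else 0) x' y' := by
    intro rr
    rw [MultilinearMap.map_smul_univ]
    have hq : (Matrix.detRowAlternating (R := ℝ) (n := Fin (n+1) ⊕ Fin n)).toMultilinearMap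
        (fun r => Rt n t x x' y y' r (rr r))
        = qker n t (fun i => x i + if rr (Sum.inl i) then 1 else 0)
          (fun i => y i + if rr (Sum.inr i) then 1 else 0) x' y' := by
      unfold qker
      show Matrix.detRowAlternating _ = Matrix.detRowAlternating _
      congr 1
      funext r c
      cases r with
      | inl i => cases c <;> rfl
      | inr i => cases c <;> rfl
    rw [hq, smul_eq_mul]
    congr 1
    rw [Finset.prod_const, Finset.card_univ, Fintype.card_sum, Fintype.card_fin,
      Fintype.card_fin]
    congr 1
    omega
  simp only [h3]
  rw [← Finset.mul_sum]
  rw [Fintype.sum_equiv (Equiv.sumArrowEquivProdArrow (Fin (n+1)) (Fin n) Bool)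
    (fun rr : (Fin (n+1) ⊕ Fin n) → Bool =>
        qker n t (fun i => x i + if rr (Sum.inl i) then 1 else 0)
          (fun i => y i + if rr (Sum.inr i) then 1 else 0) x' y')
    (fun p : ((Fin (n+1)) → Bool) × ((Fin n) → Bool) =>
        qker n t (fun i => x i + if p.1 i then 1 else 0)
          (fun i => y i + if p.2 i then 1 else 0) x' y') (fun rr => rfl)]
  rw [Fintype.sum_prod_type, inv_pow, ← div_eq_inv_mul]
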